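/- For any tower (X_n)_{n∈ω} of uniform spaces, the uniformity of the uniform direct limit u-lim X_n is generated by the family of pseudometrics { lim d_n : (d_n)_{n∈ω} a monotone sequence with d_n a uniform pseudometric on X_n }; that is, the sets { (x,y) : lim d_n(x,y) < ε } for ε > 0 and monotone sequences (d_n) form a base of the uniformity of u-lim X_n. -/

import Mathlib

open Set Filter Topology

universe u

/-- A tower of uniform spaces on the ambient set `X`: an increasing sequence
`S 0 ⊆ S 1 ⊆ ⋯` of subsets covering `X`, each `S n` carrying a uniformity which is
the subspace uniformity inherited from `S (n+1)`. -/
structure UniformTower (X : Type u) where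
  S : ℕ → Set X
  mono : Monotone S
  iUnion_eq : ⋃ n, S n = Set.univ
  u : (n : ℕ) → UniformSpace (S n)
  compat : ∀ n, u n = UniformSpace.comap (Set.inclusion (mono (Nat.le_succ n))) (u (n + 1))

namespace UniformTower

variable {X : Type u} (T : UniformTower X)

/-- The uniform direct limit: the strongest (finest) uniformity on `X` making all
the identity inclusions `S n → X` uniformly continuous. -/
noncomputable def dirLim : UniformSpace X :=
  sInf {u' : UniformSpace X |
    ∀ n, @UniformContinuous _ _ (T.u n) u' (Subtype.val : T.S n → X)}

/-- The height `|x| = min {n : x ∈ S n}` of a point of `X`. -/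
noncomputable def height (x : X) : ℕ := sInf {n | x ∈ T.S n}

lemma mem_S_height (x : X) : x ∈ T.S (T.height x) := by
  have hx : x ∈ ⋃ n, T.S n := T.iUnion_eq ▸ Set.mem_univ x
  rcases Set.mem_iUnion.mp hx with ⟨n, hn⟩
  exact Nat.sInf_mem ⟨n, show n ∈ {m | x ∈ T.S m} from hn⟩

/-- Given a sequence of pseudometrics `d n` on the stages `S n`, the distance
`d_{|x,y|}(x,y)` where `|x,y| = max (|x|, |y|)`. -/
noncomputable def chainD (d : (n : ℕ) → T.S n → T.S n → ℝ) (x y : X) : ℝ :=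
  d (max (T.height x) (T.height y))
    ⟨x, T.mono (le_max_left _ _) (T.mem_S_height x)⟩
    ⟨y, T.mono (le_max_right _ _) (T.mem_S_height y)⟩

/-- The limit pseudometric `lim d_n` of a sequence of pseudometrics:
`lim d_n (x,y) = inf { Σ_{i=1}^m d_{|x_{i-1},x_i|}(x_{i-1},x_i) : x = x_0, x_1, …, x_m = y }`. -/
noncomputable def limD (d : (n : ℕ) → T.S n → T.S n → ℝ) (x y : X) : ℝ :=
  sInf {r : ℝ | ∃ (m : ℕ) (c : ℕ → X), c 0 = x ∧ c m = y ∧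
    r = ∑ i ∈ Finset.range m, T.chainD d (c i) (c (i + 1))}

/-- A sequence of pseudometrics on the stages of the tower is monotone if
`d n ≤ d (n+1)` on `S n × S n`. -/
def MonotoneSeq (d : (n : ℕ) → T.S n → T.S n → ℝ) : Prop :=
  ∀ n (x y : T.S n),
    d n x y ≤ d (n + 1) (Set.inclusion (T.mono (Nat.le_succ n)) x)
      (Set.inclusion (T.mono (Nat.le_succ n)) y)

end UniformTower

/-- `d` is a pseudometric: it vanishes on the diagonal, is symmetric and satisfies
the triangle inequality. -/
def IsPseudometric {α : Type*} (d : α → α → ℝ) : Prop :=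
  (∀ x, d x x = 0) ∧ (∀ x y, d x y = d y x) ∧ (∀ x y z, d x z ≤ d x y + d y z)

/-- `d` is a uniform pseudometric on the uniform space `(α, u)`:
for every `ε > 0` the set `{d < ε}` is an entourage. -/
def IsUniformPseudometric {α : Type*} (u : UniformSpace α) (d : α → α → ℝ) : Prop :=
  IsPseudometric d ∧ ∀ ε : ℝ, 0 < ε → {p : α × α | d p.1 p.2 < ε} ∈ @uniformity α u

section Aux

lemma IsPseudometric.nonneg {α : Type*} {d : α → α → ℝ} (h : IsPseudometric d) (x y : α) :
    0 ≤ d x y := by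
  have h1 := h.1 x
  have h2 := h.2.1 y x
  have h3 := h.2.2 x y x
  linarith

namespace UniformTower

variable {X : Type u} (T : UniformTower X) (d : (n : ℕ) → T.S n → T.S n → ℝ)

lemma d_congr {m n : ℕ} (h : m = n) {a b : X} (ha : a ∈ T.S m) (hb : b ∈ T.S m)
    (ha' : a ∈ T.S n) (hb' : b ∈ T.S n) :
    d m ⟨a, ha⟩ ⟨b, hb⟩ = d n ⟨a, ha'⟩ ⟨b, hb'⟩ := by subst h; rfl

lemma chainD_nonneg (hd : ∀ n, IsPseudometric (d n)) (x y : X) : 0 ≤ T.chainD d x y :=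
  (hd _).nonneg _ _

lemma chainD_symm (hd : ∀ n, IsPseudometric (d n)) (x y : X) :
    T.chainD d x y = T.chainD d y x := by
  unfold UniformTower.chainD
  rw [T.d_congr d (max_comm (T.height x) (T.height y))
    (T.mono (le_max_left _ _) (T.mem_S_height x)) (T.mono (le_max_right _ _) (T.mem_S_height y))
    (T.mono (le_max_right _ _) (T.mem_S_height x)) (T.mono (le_max_left _ _) (T.mem_S_height y))]
  exact (hd _).2.1 _ _

lemma monoSeq_le {d : (n : ℕ) → T.S n → T.S n → ℝ} (hmono : T.MonotoneSeq d) {k n : ℕ}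
    (h : k ≤ n) (x y : T.S k) :
    d k x y ≤ d n ⟨x.1, T.mono h x.2⟩ ⟨y.1, T.mono h y.2⟩ := by
  induction n, h using Nat.le_induction with
  | base => exact le_rfl
  | succ n hn ih => exact ih.trans (hmono n ⟨x.1, T.mono hn x.2⟩ ⟨y.1, T.mono hn y.2⟩)

lemma chainD_le {d : (n : ℕ) → T.S n → T.S n → ℝ} (hmono : T.MonotoneSeq d) {n : ℕ}
    (x y : T.S n) : T.chainD d x.1 y.1 ≤ d n x y := by
  have hx : T.height x.1 ≤ n := Nat.sInf_le x.2
  have hy : T.height y.1 ≤ n := Nat.sInf_le y.2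
  exact T.monoSeq_le hmono (max_le hx hy)
    ⟨x.1, T.mono (le_max_left _ _) (T.mem_S_height x.1)⟩
    ⟨y.1, T.mono (le_max_right _ _) (T.mem_S_height y.1)⟩

/-- The set of chain-sums from `x` to `y`. -/
def chainSet (x y : X) : Set ℝ :=
  {r : ℝ | ∃ (m : ℕ) (c : ℕ → X), c 0 = x ∧ c m = y ∧
    r = ∑ i ∈ Finset.range m, T.chainD d (c i) (c (i + 1))}

lemma limD_eq_sInf (x y : X) : T.limD d x y = sInf (T.chainSet d x y) := rfl

lemma chainSet_nonempty (x y : X) : (T.chainSet d x y).Nonempty := by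
  refine ⟨T.chainD d x y, 1, fun i => if i = 0 then x else y, by simp, by simp, by simp⟩

lemma chainSet_bddBelow (hd : ∀ n, IsPseudometric (d n)) (x y : X) :
    BddBelow (T.chainSet d x y) := by
  refine ⟨0, ?_⟩
  rintro r ⟨m, c, h0, hm, rfl⟩
  exact Finset.sum_nonneg fun i _ => T.chainD_nonneg d hd _ _

lemma limD_nonneg (hd : ∀ n, IsPseudometric (d n)) (x y : X) : 0 ≤ T.limD d x y :=
  le_csInf (T.chainSet_nonempty d x y) fun r hr => by
    obtain ⟨m, c, h0, hm, rfl⟩ := hr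
    exact Finset.sum_nonneg fun i _ => T.chainD_nonneg d hd _ _

lemma limD_le_chainD (hd : ∀ n, IsPseudometric (d n)) (x y : X) :
    T.limD d x y ≤ T.chainD d x y :=
  csInf_le (T.chainSet_bddBelow d hd x y)
    ⟨1, fun i => if i = 0 then x else y, by simp, by simp, by simp⟩

lemma limD_self (hd : ∀ n, IsPseudometric (d n)) (x : X) : T.limD d x x = 0 := by
  refine le_antisymm ?_ (T.limD_nonneg d hd x x)
  exact csInf_le (T.chainSet_bddBelow d hd x x) ⟨0, fun _ => x, rfl, rfl, by simp⟩

lemma chainSet_symm_subset (hd : ∀ n, IsPseudometric (d n)) (x y : X) :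
    T.chainSet d x y ⊆ T.chainSet d y x := by
  rintro r ⟨m, c, h0, hm, rfl⟩
  refine ⟨m, fun i => c (m - i), by simp [hm], by simp [h0], ?_⟩
  rw [← Finset.sum_range_reflect (fun j => T.chainD d (c (m - j)) (c (m - (j + 1)))) m]
  refine Finset.sum_congr rfl fun j hj => ?_
  have hjm : j < m := Finset.mem_range.mp hj
  have e1 : m - (m - 1 - j) = j + 1 := by omega
  have e2 : m - (m - 1 - j + 1) = j := by omega
  show T.chainD d (c j) (c (j + 1)) = T.chainD d (c (m - (m - 1 - j))) (c (m - (m - 1 - j + 1)))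
  rw [e1, e2]
  exact T.chainD_symm d hd _ _

lemma limD_symm (hd : ∀ n, IsPseudometric (d n)) (x y : X) :
    T.limD d x y = T.limD d y x := by
  rw [limD_eq_sInf, limD_eq_sInf]
  exact congrArg sInf (le_antisymm (T.chainSet_symm_subset d hd x y)
    (T.chainSet_symm_subset d hd y x))

lemma chainSet_add_mem {x y z : X} {a b : ℝ} (ha : a ∈ T.chainSet d x y)
    (hb : b ∈ T.chainSet d y z) : a + b ∈ T.chainSet d x z := by
  obtain ⟨m1, c1, h10, h1m, rfl⟩ := ha
  obtain ⟨m2, c2, h20, h2m, rfl⟩ := hb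
  refine ⟨m1 + m2, fun i => if i ≤ m1 then c1 i else c2 (i - m1), by simp [h10], ?_, ?_⟩
  · show (if m1 + m2 ≤ m1 then c1 (m1 + m2) else c2 (m1 + m2 - m1)) = z
    by_cases h : m1 + m2 ≤ m1
    · have hm2 : m2 = 0 := by omega
      subst hm2
      rw [if_pos h, Nat.add_zero, h1m, ← h20]
      exact h2m
    · rw [if_neg h, Nat.add_sub_cancel_left]
      exact h2m
  · rw [Finset.sum_range_add]
    congr 1
    · refine Finset.sum_congr rfl fun i hi => ?_
      have hi' : i < m1 := Finset.mem_range.mp hi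
      show T.chainD d (c1 i) (c1 (i + 1)) = T.chainD d
        (if i ≤ m1 then c1 i else c2 (i - m1))
        (if i + 1 ≤ m1 then c1 (i + 1) else c2 (i + 1 - m1))
      rw [if_pos (by omega : i ≤ m1), if_pos (by omega : i + 1 ≤ m1)]
    · refine Finset.sum_congr rfl fun i hi => ?_
      have hi' : i < m2 := Finset.mem_range.mp hi
      have e2 : ¬ (m1 + i + 1 ≤ m1) := by omega
      show T.chainD d (c2 i) (c2 (i + 1)) = T.chainD d
        (if m1 + i ≤ m1 then c1 (m1 + i) else c2 (m1 + i - m1))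
        (if m1 + i + 1 ≤ m1 then c1 (m1 + i + 1) else c2 (m1 + i + 1 - m1))
      rw [if_neg e2]
      have e3 : m1 + i + 1 - m1 = i + 1 := by omega
      rw [e3]
      by_cases h : m1 + i ≤ m1
      · have hi0 : i = 0 := by omega
        subst hi0
        have hc : c1 (m1 + 0) = c2 0 := by
          have e : m1 + 0 = m1 := rfl
          rw [e, h1m, ← h20]
        rw [if_pos h, hc]
      · rw [if_neg h]
        congr 2
        omega

lemma limD_triangle (hd : ∀ n, IsPseudometric (d n)) (x y z : X) :
    T.limD d x z ≤ T.limD d x y + T.limD d y z := by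
  rw [limD_eq_sInf, limD_eq_sInf, limD_eq_sInf]
  have key : ∀ a ∈ T.chainSet d x y, ∀ b ∈ T.chainSet d y z,
      sInf (T.chainSet d x z) ≤ a + b := fun a ha b hb =>
    csInf_le (T.chainSet_bddBelow d hd x z) (T.chainSet_add_mem d ha hb)
  have h1 : ∀ b ∈ T.chainSet d y z, sInf (T.chainSet d x z) - b ≤ sInf (T.chainSet d x y) :=
    fun b hb => le_csInf (T.chainSet_nonempty d x y) fun a ha =>
      sub_le_iff_le_add.mpr (key a ha b hb)
  have h2 : sInf (T.chainSet d x z) - sInf (T.chainSet d x y) ≤ sInf (T.chainSet d y z) :=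
    le_csInf (T.chainSet_nonempty d y z) fun b hb => by
      have := h1 b hb; linarith
  linarith

lemma limD_le_stage {d : (n : ℕ) → T.S n → T.S n → ℝ} (hd : ∀ n, IsPseudometric (d n))
    (hmono : T.MonotoneSeq d) {n : ℕ} (x y : T.S n) :
    T.limD d x.1 y.1 ≤ d n x y :=
  (T.limD_le_chainD d hd x.1 y.1).trans (T.chainD_le hmono x y)

/-- For a single global pseudometric, the limit pseudometric of the constant sequence
dominates the pseudometric itself. -/
lemma le_limD_of_pseudometric {D : X → X → ℝ} (hD : IsPseudometric D) (x y : X) :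
    D x y ≤ T.limD (fun _ a b => D a.1 b.1) x y := by
  rw [limD_eq_sInf]
  refine le_csInf (T.chainSet_nonempty _ x y) ?_
  rintro r ⟨m, c, h0, hm, rfl⟩
  have hsum : ∀ m' : ℕ, D (c 0) (c m') ≤
      ∑ i ∈ Finset.range m', T.chainD (fun _ a b => D a.1 b.1) (c i) (c (i + 1)) := by
    intro m'
    induction m' with
    | zero => simp [hD.1]
    | succ k ih =>
        rw [Finset.sum_range_succ]
        have htri := hD.2.2 (c 0) (c k) (c (k + 1))
        have hch : T.chainD (fun _ a b => D a.1 b.1) (c k) (c (k + 1)) = D (c k) (c (k + 1)) :=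
          rfl
        rw [hch]
        linarith
  rw [← h0, ← hm]
  exact hsum m

/-- The uniform space on `X` defined by the limit pseudometric. -/
noncomputable def limUS (hd : ∀ n, IsPseudometric (d n)) : UniformSpace X :=
  UniformSpace.ofFun (T.limD d) (T.limD_self d hd) (T.limD_symm d hd) (T.limD_triangle d hd)
    (fun ε hε => ⟨ε / 2, by linarith, fun a ha b hb => by linarith⟩)

lemma limUS_hasBasis (hd : ∀ n, IsPseudometric (d n)) :
    (@uniformity X (T.limUS d hd)).HasBasis ((0 : ℝ) < ·)
      (fun ε => {p : X × X | T.limD d p.1 p.2 < ε}) :=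
  UniformSpace.hasBasis_ofFun ⟨1, one_pos⟩ _ _ _ _ _

lemma limUS_admissible {d : (n : ℕ) → T.S n → T.S n → ℝ}
    (hd : ∀ n, IsUniformPseudometric (T.u n) (d n)) (hmono : T.MonotoneSeq d) (n : ℕ) :
    @UniformContinuous _ _ (T.u n) (T.limUS d fun k => (hd k).1) (Subtype.val : T.S n → X) := by
  show Filter.Tendsto (fun p : T.S n × T.S n => ((p.1 : X), (p.2 : X)))
    (@uniformity _ (T.u n)) (@uniformity X (T.limUS d fun k => (hd k).1))
  rw [(T.limUS_hasBasis d fun k => (hd k).1).tendsto_right_iff]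
  intro ε hε
  refine Filter.mem_of_superset ((hd n).2 ε hε) ?_
  rintro ⟨a, b⟩ hab
  exact lt_of_le_of_lt (T.limD_le_stage (fun k => (hd k).1) hmono a b) hab

end UniformTower

end Aux

/-- The uniformity of the uniform direct limit `u-lim X_n` of a tower of uniform spaces
is generated by the limit pseudometrics `lim d_n` of monotone sequences `(d_n)` of uniform
pseudometrics: the sets `{(x,y) : lim d_n (x,y) < ε}`, for `ε > 0` and `(d_n)` a monotone
sequence of uniform pseudometrics, form a base of the uniformity of `u-lim X_n`. -/
theorem statement3 {X : Type u} (T : UniformTower X) :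
    (@uniformity X T.dirLim).HasBasis
      (fun p : ((n : ℕ) → T.S n → T.S n → ℝ) × ℝ =>
        (∀ n, IsUniformPseudometric (T.u n) (p.1 n)) ∧ T.MonotoneSeq p.1 ∧ 0 < p.2)
      (fun p => {q : X × X | T.limD p.1 q.1 q.2 < p.2}) := by
  constructor
  intro U
  constructor
  · -- forward direction
    intro hU
    classical
    let A : Set (UniformSpace X) := {u' : UniformSpace X |
      ∀ n, @UniformContinuous _ _ (T.u n) u' (Subtype.val : T.S n → X)}
    have htop : (⊤ : UniformSpace X) ∈ A := fun n => le_top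
    haveI : Nonempty ↥A := ⟨⟨⊤, htop⟩⟩
    have hdir : Directed (· ≥ ·) (fun u' : ↥A => @uniformity X u'.1) := by
      rintro ⟨u1, h1⟩ ⟨u2, h2⟩
      refine ⟨⟨u1 ⊓ u2, fun n => ?_⟩, inf_le_left, inf_le_right⟩
      show Filter.Tendsto (fun p : T.S n × T.S n => ((p.1 : X), (p.2 : X)))
        (@uniformity _ (T.u n)) (@uniformity X (u1 ⊓ u2))
      exact Filter.tendsto_inf.mpr ⟨h1 n, h2 n⟩
    have he : @uniformity X T.dirLim = ⨅ u' : ↥A, @uniformity X u'.1 := by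
      rw [show T.dirLim = sInf A from rfl, sInf_eq_iInf', iInf_uniformity]
    rw [he, Filter.mem_iInf_of_directed hdir U] at hU
    obtain ⟨⟨u', hu'A⟩, hUu'⟩ := hU
    -- shrink entourages
    have shrink : ∀ W ∈ @uniformity X u', ∃ W', W' ∈ @uniformity X u' ∧ SetRel.IsSymm W' ∧
        SetRel.comp W' W' ⊆ W ∧ W' ⊆ W := by
      intro W hW
      obtain ⟨W', hW', hs, hc⟩ := @comp_symm_mem_uniformity_sets X u' W hW
      exact ⟨W', hW', hs, hc, (@subset_comp_self_of_mem_uniformity X u' W' hW').trans hc⟩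
    choose f hf1 hf2 hf3 hf4 using shrink
    let V : ℕ → {W : Set (X × X) // W ∈ @uniformity X u'} := fun n =>
      Nat.rec ⟨f U hUu', hf1 U hUu'⟩ (fun _ p => ⟨f p.1 p.2, hf1 p.1 p.2⟩) n
    have hV0 : (V 0).1 ⊆ U := hf4 U hUu'
    have hVsym : ∀ n, SetRel.IsSymm (V n).1 := by
      intro n
      cases n with
      | zero => exact hf2 U hUu'
      | succ n => exact hf2 (V n).1 (V n).2
    have hVcomp : ∀ n, SetRel.comp (V (n + 1)).1 (V (n + 1)).1 ⊆ (V n).1 :=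
      fun n => hf3 (V n).1 (V n).2
    have hVsub : ∀ n, (V (n + 1)).1 ≤ (V n).1 := fun n => hf4 (V n).1 (V n).2
    have hVanti : Antitone fun n => (V n).1 := antitone_nat_of_succ_le hVsub
    -- the countably generated coarser uniformity
    let F : Filter (X × X) := ⨅ n, Filter.principal (V n).1
    have hFbasis : F.HasBasis (fun _ => True) (fun n => (V n).1) :=
      Filter.hasBasis_iInf_principal
        (fun m n => ⟨max m n, hVanti (le_max_left m n), hVanti (le_max_right m n)⟩)
    have hFle : @uniformity X u' ≤ F := le_iInf fun n => Filter.le_principal_iff.mpr (V n).2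
    let u'' : UniformSpace X := UniformSpace.ofCore
      { uniformity := F
        refl := le_iInf fun n => Filter.principal_mono.mpr
          (by rintro ⟨a, b⟩ (rfl : a = b); exact @refl_mem_uniformity X u' a (V n).1 (V n).2)
        symm := Filter.tendsto_iInf.mpr fun n => Filter.tendsto_iInf' n
          (Filter.tendsto_principal_principal.mpr fun p hp =>
            show p ∈ Prod.swap ⁻¹' (V n).1 from (hVsym n).symm p.1 p.2 hp)
        comp := le_iInf fun n => Filter.le_principal_iff.mpr
          (Filter.mem_of_superset
            (Filter.mem_lift' (Filter.mem_iInf_of_mem (n + 1) (Filter.mem_principal_self _)))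
            (hVcomp n)) }
    have hcg : Filter.IsCountablyGenerated F := hFbasis.isCountablyGenerated
    have hu''F : @uniformity X u'' = F := rfl
    obtain ⟨I, hI⟩ := @UniformSpace.metrizable_uniformity X u'' hcg
    letI : PseudoMetricSpace X := I
    have hdistF : @uniformity X I.toUniformSpace = F := by rw [hI]; exact hu''F
    have hD : IsPseudometric (fun a b : X => dist a b) :=
      ⟨dist_self, dist_comm, dist_triangle⟩
    have hdistU' : ∀ ε : ℝ, 0 < ε → {p : X × X | dist p.1 p.2 < ε} ∈ @uniformity X u' :=
      fun ε hε => hFle (hdistF ▸ Metric.dist_mem_uniformity hε)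
    obtain ⟨ε0, hε0, hball⟩ := Metric.mem_uniformity_dist.mp
      (show (V 0).1 ∈ @uniformity X I.toUniformSpace from
        hdistF.symm ▸ Filter.mem_iInf_of_mem 0 (Filter.mem_principal_self _))
    refine ⟨⟨fun n a b => dist (a : X) (b : X), ε0⟩, ⟨?_, ?_, hε0⟩, ?_⟩
    · intro n
      refine ⟨⟨fun a => dist_self _, fun a b => dist_comm _ _, fun a b c => dist_triangle _ _ _⟩,
        fun ε hε => ?_⟩
      exact hu'A n (hdistU' ε hε)
    · exact fun n a b => le_of_eq rfl
    · intro q hq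
      have hle : dist q.1 q.2 ≤ T.limD (fun n a b => dist (a : X) (b : X)) q.1 q.2 :=
        T.le_limD_of_pseudometric hD q.1 q.2
      exact hV0 (hball (lt_of_le_of_lt hle hq))
  · -- backward direction
    rintro ⟨⟨dseq, ε⟩, ⟨hunif, hmono, hε⟩, hsub⟩
    have hd : ∀ n, IsPseudometric (dseq n) := fun n => (hunif n).1
    have hadm : T.limUS dseq hd ∈ {u' : UniformSpace X |
        ∀ n, @UniformContinuous _ _ (T.u n) u' (Subtype.val : T.S n → X)} :=
      fun n => T.limUS_admissible hunif hmono n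
    have hle : T.dirLim ≤ T.limUS dseq hd := sInf_le hadm
    have hmem : {q : X × X | T.limD dseq q.1 q.2 < ε} ∈ @uniformity X (T.limUS dseq hd) :=
      (T.limUS_hasBasis dseq hd).mem_of_mem hε
    exact Filter.mem_of_superset (hle hmem) hsub
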